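/- Let r, b be positive integers and let θ be the real root of the irreducible trinomial P(X) = X³ + 3rbX − b ∈ ℤ[X], L = ℚ(θ); let ι : L → ℝ be the real embedding and τ : L → ℂ a complex embedding. Let x, y, z ∈ ℤ and set φ = x + yθ + zθ². If 0 < ι(φ) < b and |τ(φ)| < b, then the following three estimates hold: |x − 2rbz| < b, |3z − 6ry| < 1 + 2√(3rb + 1), and |6r²bz + y − 2rx| < 1 + 2rb. -/

import Mathlib

open NumberField Polynomial

private lemma ringhom_ext_of_gen {L : Type*} [Field L] [NumberField L] {θ : L}
    (hgen : IntermediateField.adjoin ℚ {θ} = ⊤)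
    (f g : L →+* ℂ) (h : f θ = g θ) : f = g := by
  have hint : IsIntegral ℚ θ := IsIntegral.of_finite ℚ θ
  have halg : Algebra.adjoin ℚ {θ} = ⊤ := by
    have := IntermediateField.adjoin_simple_toSubalgebra_of_isAlgebraic hint.isAlgebraic
    rw [hgen] at this
    rw [← this, IntermediateField.top_toSubalgebra]
  have hle : Algebra.adjoin ℚ {θ} ≤ AlgHom.equalizer f.toRatAlgHom g.toRatAlgHom :=
    Algebra.adjoin_le (by simpa using h)
  rw [halg] at hle
  ext a
  exact hle trivial

set_option maxHeartbeats 1600000 in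
theorem cubic_trinomial_crucial_estimates
    (r b : ℕ) (hr : 0 < r) (hb : 0 < b)
    (L : Type*) [Field L] [NumberField L] (θ : L)
    (hroot : θ ^ 3 + ((3 * r * b : ℕ) : L) * θ - (b : L) = 0)
    (hirr : Irreducible
      ((X ^ 3 + C ((3 * r * b : ℕ) : ℤ) * X - C ((b : ℕ) : ℤ) : Polynomial ℤ).map
        (Int.castRingHom ℚ)))
    (hgen : IntermediateField.adjoin ℚ {θ} = ⊤)
    (ι : L →+* ℝ) (τ : L →+* ℂ) (hτ : ¬ NumberField.ComplexEmbedding.IsReal τ)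
    (x y z : ℤ)
    (hpos : 0 < ι ((x : L) + (y : L) * θ + (z : L) * θ ^ 2))
    (hlt : ι ((x : L) + (y : L) * θ + (z : L) * θ ^ 2) < b)
    (habs : ‖τ ((x : L) + (y : L) * θ + (z : L) * θ ^ 2)‖ < b) :
    |(x : ℝ) - 2 * (r : ℝ) * (b : ℝ) * (z : ℝ)| < (b : ℝ) ∧
    |3 * (z : ℝ) - 6 * (r : ℝ) * (y : ℝ)| < 1 + 2 * Real.sqrt (3 * (r : ℝ) * (b : ℝ) + 1) ∧
    |6 * (r : ℝ) ^ 2 * (b : ℝ) * (z : ℝ) + (y : ℝ) - 2 * (r : ℝ) * (x : ℝ)| < 1 + 2 * (r : ℝ) * (b : ℝ) := by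
  set A : ℝ := ι θ with hAdef
  set B : ℂ := τ θ with hBdef
  set u : ℝ := ι ((x : L) + (y : L) * θ + (z : L) * θ ^ 2) with hudef
  set w : ℂ := τ ((x : L) + (y : L) * θ + (z : L) * θ ^ 2) with hwdef
  have hb' : (1 : ℝ) ≤ (b : ℝ) := by exact_mod_cast hb
  have hr' : (1 : ℝ) ≤ (r : ℝ) := by exact_mod_cast hr
  have hc : (0 : ℝ) < 3 * (r : ℝ) * b := by positivity
  -- real root equation
  have hA : A ^ 3 + 3 * (r : ℝ) * b * A - b = 0 := by
    have := congrArg ι hroot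
    simp only [map_add, map_sub, map_mul, map_pow, map_natCast, map_zero] at this
    push_cast at this ⊢
    linarith [this]
  have hu : u = (x : ℝ) + y * A + z * A ^ 2 := by
    simp only [hudef, map_add, map_mul, map_pow, map_intCast, hAdef]
  -- complex root equation
  have hB : B ^ 3 + 3 * (r : ℝ) * b * B - b = 0 := by
    have := congrArg τ hroot
    simp only [map_add, map_sub, map_mul, map_pow, map_natCast, map_zero] at this
    push_cast at this ⊢
    linear_combination this
  have hw : w = (x : ℂ) + y * B + z * B ^ 2 := by
    simp only [hwdef, map_add, map_mul, map_pow, map_intCast, hBdef]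
  -- A is positive and less than 1
  have hApos : 0 < A := by nlinarith [sq_nonneg A, hc]
  have hA1 : A < 1 := by nlinarith
  -- B is not conj B
  have hBconj_ne : (starRingEnd ℂ) B ≠ B := by
    intro h
    apply hτ
    rw [ComplexEmbedding.isReal_iff]
    exact ringhom_ext_of_gen hgen _ _ (by simpa using h)
  -- B ≠ A
  have hBA : B ≠ (A : ℂ) := by
    intro h
    apply hBconj_ne
    rw [h, Complex.conj_ofReal]
  -- cast equations to ℂ
  have hA2 : (A : ℂ) ^ 3 + 3 * (r : ℝ) * b * A - b = 0 := by
    exact_mod_cast congrArg (Complex.ofReal) hA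
  have hA2' : (A : ℂ) ^ 3 + ((3 : ℂ) * r * b) * A - b = 0 := by
    push_cast at hA2 ⊢; linear_combination hA2
  have hB2 : B ^ 3 + ((3 : ℂ) * r * b) * B - b = 0 := by
    push_cast at hB ⊢; linear_combination hB
  -- quadratic satisfied by B
  have hq : B ^ 2 + (A : ℂ) * B + ((A : ℂ) ^ 2 + (3 : ℂ) * r * b) = 0 := by
    have hfac : (B - (A : ℂ)) * (B ^ 2 + (A : ℂ) * B + ((A : ℂ) ^ 2 + (3 : ℂ) * r * b)) = 0 := by
      linear_combination hB2 - hA2'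
    rcases mul_eq_zero.mp hfac with h | h
    · exact absurd (sub_eq_zero.mp h) hBA
    · exact h
  -- conjugate of B satisfies the same quadratic
  have hqc : ((starRingEnd ℂ) B) ^ 2 + (A : ℂ) * ((starRingEnd ℂ) B)
      + ((A : ℂ) ^ 2 + (3 : ℂ) * r * b) = 0 := by
    have := congrArg (starRingEnd ℂ) hq
    simpa [map_add, map_mul, map_pow, map_ofNat, Complex.conj_ofReal] using this
  -- sum of the two complex roots
  have hcB : (starRingEnd ℂ) B = -(A : ℂ) - B := by
    have hfac : (B - (starRingEnd ℂ) B) * (B + (starRingEnd ℂ) B + (A : ℂ)) = 0 := by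
      linear_combination hq - hqc
    rcases mul_eq_zero.mp hfac with h | h
    · exact absurd (sub_eq_zero.mp h).symm hBconj_ne
    · linear_combination h
  -- |B|^2 = A^2 + 3rb
  have hnormB : ‖B‖ ^ 2 = A ^ 2 + 3 * (r : ℝ) * b := by
    have h1 : B * (starRingEnd ℂ) B = ((A ^ 2 + 3 * (r : ℝ) * b : ℝ) : ℂ) := by
      rw [hcB]; push_cast; linear_combination -hq
    have h2 : (Complex.normSq B : ℂ) = ((A ^ 2 + 3 * (r : ℝ) * b : ℝ) : ℂ) := by
      rw [← Complex.mul_conj]; exact h1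
    have h3 : Complex.normSq B = A ^ 2 + 3 * (r : ℝ) * b := by exact_mod_cast h2
    rw [Complex.sq_norm]; exact h3
  have hu2 : (u : ℂ) = (x : ℂ) + y * A + z * A ^ 2 := by
    rw [hu]; push_cast; ring
  have hwc : (starRingEnd ℂ) w = (x : ℂ) + y * ((starRingEnd ℂ) B)
      + z * ((starRingEnd ℂ) B) ^ 2 := by
    have := congrArg (starRingEnd ℂ) hw
    simpa [map_add, map_mul, map_pow, Complex.conj_ofReal] using this
  -- the three key complex identities
  have key0 : (u : ℂ) + (w + (starRingEnd ℂ) w)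
      = 3 * x - 2 * ((3 : ℂ) * r * b) * z := by
    rw [hwc, hcB]
    linear_combination hu2 + hw + 2 * (z : ℂ) * hq
  have key1 : (A : ℂ) * u + (B * w + (starRingEnd ℂ) (B * w))
      = 3 * b * z - 2 * ((3 : ℂ) * r * b) * y := by
    rw [map_mul, hwc, hcB]
    linear_combination (A : ℂ) * hu2 + B * hw + (2 * (y : ℂ) - 3 * z * A) * hq
      + 3 * (z : ℂ) * hA2'
  have key2 : (A : ℂ) ^ 2 * u + (B ^ 2 * w + (starRingEnd ℂ) (B ^ 2 * w))
      = 3 * b * y - 2 * ((3 : ℂ) * r * b) * x + 2 * ((3 : ℂ) * r * b) ^ 2 * z := by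
    rw [map_mul, map_pow, hwc, hcB]
    linear_combination (A : ℂ) ^ 2 * hu2 + B ^ 2 * hw
      + (2 * (x : ℂ) - 3 * y * A - 4 * ((3 : ℂ) * r * b) * z
          + 2 * z * (B ^ 2 + A * B + ((A : ℂ) ^ 2 + 3 * r * b))) * hq
      + 3 * (y : ℂ) * hA2'
  -- real versions
  have hS0 : u + 2 * w.re = 3 * x - 2 * (3 * (r : ℝ) * b) * z := by
    rw [Complex.add_conj] at key0
    exact_mod_cast key0
  have hS1 : A * u + 2 * (B * w).re = 3 * b * z - 2 * (3 * (r : ℝ) * b) * y := by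
    rw [Complex.add_conj] at key1
    exact_mod_cast key1
  have hS2 : A ^ 2 * u + 2 * (B ^ 2 * w).re
      = 3 * b * y - 2 * (3 * (r : ℝ) * b) * x + 2 * (3 * (r : ℝ) * b) ^ 2 * z := by
    rw [Complex.add_conj] at key2
    exact_mod_cast key2
  -- bounds
  have hwre : |w.re| ≤ ‖w‖ := Complex.abs_re_le_norm w
  have habsw := habs
  have hBabs : ‖B‖ = Real.sqrt (A ^ 2 + 3 * (r : ℝ) * b) := by
    rw [← hnormB, Real.sqrt_sq (norm_nonneg B)]
  set s : ℝ := Real.sqrt (A ^ 2 + 3 * (r : ℝ) * b) with hsdef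
  have hs0 : 0 ≤ s := Real.sqrt_nonneg _
  have hs1 : s ≤ Real.sqrt (3 * (r : ℝ) * b + 1) := by
    apply Real.sqrt_le_sqrt; nlinarith
  have hs2 : s ^ 2 = A ^ 2 + 3 * (r : ℝ) * b := Real.sq_sqrt (by positivity)
  have hBwre : |(B * w).re| ≤ s * ‖w‖ := by
    calc |(B * w).re| ≤ ‖B * w‖ := Complex.abs_re_le_norm _
      _ = ‖B‖ * ‖w‖ := norm_mul _ _
      _ = s * ‖w‖ := by rw [hBabs]
  have hB2wre : |(B ^ 2 * w).re| ≤ (A ^ 2 + 3 * (r : ℝ) * b) * ‖w‖ := by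
    calc |(B ^ 2 * w).re| ≤ ‖B ^ 2 * w‖ := Complex.abs_re_le_norm _
      _ = ‖B‖ ^ 2 * ‖w‖ := by rw [norm_mul, norm_pow]
      _ = (A ^ 2 + 3 * (r : ℝ) * b) * ‖w‖ := by rw [hnormB]
  have hwnn : 0 ≤ ‖w‖ := norm_nonneg w
  obtain ⟨hw1, hw2⟩ := abs_le.mp hwre
  obtain ⟨hBw1, hBw2⟩ := abs_le.mp hBwre
  obtain ⟨hB2w1, hB2w2⟩ := abs_le.mp hB2wre
  have hsq1 : 0 ≤ Real.sqrt (3 * (r : ℝ) * b + 1) := Real.sqrt_nonneg _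
  have hbpos : (0 : ℝ) < b := by exact_mod_cast hb
  have hA2lt1 : A ^ 2 < 1 := by nlinarith [hApos, hA1, sq_nonneg A]
  refine ⟨?_, ?_, ?_⟩
  · rw [abs_lt]
    have hS0' : 3 * ((x : ℝ) - 2 * r * b * z) = u + 2 * w.re := by linear_combination -hS0
    constructor <;> linarith
  · rw [abs_lt]
    have hS1' : (b : ℝ) * (3 * z - 6 * r * y) = A * u + 2 * (B * w).re := by
      linear_combination -hS1
    have p0 : 0 < A * u := mul_pos hApos hpos
    have p1 : A * u < A * b := mul_lt_mul_of_pos_left hlt hApos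
    have p2 : s * ‖w‖ ≤ s * b := mul_le_mul_of_nonneg_left habsw.le hs0
    have p3 : A * b < 1 * b := mul_lt_mul_of_pos_right hA1 hbpos
    have p4 : s * b ≤ Real.sqrt (3 * (r : ℝ) * b + 1) * b :=
      mul_le_mul_of_nonneg_right hs1 hbpos.le
    have hup : (b : ℝ) * (3 * z - 6 * r * y) < b * (1 + 2 * Real.sqrt (3 * (r : ℝ) * b + 1)) := by
      nlinarith
    have hlo : (b : ℝ) * (-(1 + 2 * Real.sqrt (3 * (r : ℝ) * b + 1))) < b * (3 * z - 6 * r * y) := by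
      have hexp : (b:ℝ) * (-(1 + 2 * Real.sqrt (3 * (r : ℝ) * b + 1)))
          = -(1 * b) - 2 * (Real.sqrt (3 * (r : ℝ) * b + 1) * b) := by ring
      rw [hexp]; linarith [hS1', p0, p2, p4, hBw1, hbpos]
    exact ⟨by linarith [(mul_lt_mul_iff_right₀ hbpos).mp hlo], by linarith [(mul_lt_mul_iff_right₀ hbpos).mp hup]⟩
  · rw [abs_lt]
    have hS2' : 3 * (b : ℝ) * (6 * r ^ 2 * b * z + y - 2 * r * x)
        = A ^ 2 * u + 2 * (B ^ 2 * w).re := by linear_combination -hS2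
    have p0 : 0 < A ^ 2 * u := mul_pos (by positivity) hpos
    have p1 : A ^ 2 * u ≤ A ^ 2 * b := mul_le_mul_of_nonneg_left hlt.le (sq_nonneg A)
    have p2 : (A ^ 2 + 3 * (r : ℝ) * b) * ‖w‖ < (A ^ 2 + 3 * (r : ℝ) * b) * b :=
      mul_lt_mul_of_pos_left habsw (by positivity)
    have p3 : A ^ 2 * b < 1 * b := mul_lt_mul_of_pos_right hA2lt1 hbpos
    have h3b : (0 : ℝ) < 3 * b := by linarith
    have hup : 3 * (b : ℝ) * (6 * r ^ 2 * b * z + y - 2 * r * x)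
        < 3 * b * (1 + 2 * r * b) := by
      linarith [hS2', p1, p2, p3, hB2w2]
    have hlo : 3 * (b : ℝ) * (-(1 + 2 * (r : ℝ) * b))
        < 3 * b * (6 * r ^ 2 * b * z + y - 2 * r * x) := by
      have hrbb : (0:ℝ) < 3 * (r:ℝ) * b * b := by positivity
      linarith [hS2', p0, p2, p3, hB2w1, hrbb]
    exact ⟨by linarith [(mul_lt_mul_iff_right₀ h3b).mp hlo], by linarith [(mul_lt_mul_iff_right₀ h3b).mp hup]⟩
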